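/- For every positive integer m, the number of F_{2^m}-rational points (including the point at infinity) of the elliptic curve y² + y = x³ + 1 over F_{2^m} equals 2^m + 1 if m is odd, and equals 2^m + 1 − 2·(−2)^(m/2) if m is even. -/
import Mathlib

set_option linter.unusedSectionVars false
set_option linter.unusedVariables false

open Finset

section AuxEC

variable {F : Type*} [Field F] [Fintype F] [DecidableEq F] [CharP F 2]

private def asMap (y : F) : F := y ^ 2 + y

private lemma asMap_add (a b : F) : asMap (a + b) = asMap a + asMap b := by
  unfold asMap; rw [CharTwo.add_sq]; ring

private def K : Finset F := univ.image asMap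

private lemma mem_K_iff {c : F} : c ∈ (K (F := F)) ↔ ∃ y, asMap y = c := by
  unfold K; simp [mem_image]

private lemma fiber_card (c : F) :
    (univ.filter fun y : F => y ^ 2 + y = c).card = if c ∈ K then 2 else 0 := by
  have h2 : (2 : F) = 0 := CharTwo.two_eq_zero
  split_ifs with h
  · obtain ⟨y0, hy0⟩ := mem_K_iff.mp h
    unfold asMap at hy0
    have heq : (univ.filter fun y : F => y ^ 2 + y = c) = {y0, y0 + 1} := by
      ext y
      simp only [mem_filter, mem_univ, true_and, mem_insert, mem_singleton]
      constructor
      · intro hy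
        have h3 : (y + y0) * (y + y0 + 1) = 0 := by
          linear_combination hy - hy0 + (y0 ^ 2 + y0 + y * y0) * h2
        rcases mul_eq_zero.mp h3 with h4 | h4
        · left; linear_combination h4 - y0 * h2
        · right; linear_combination h4 - (y0 + 1) * h2
      · rintro (rfl | rfl)
        · exact hy0
        · linear_combination hy0 + (y0 + 1) * h2
    rw [heq, card_insert_of_notMem, card_singleton]
    simp only [mem_singleton]
    intro hh
    exact one_ne_zero (by linear_combination -hh : (1 : F) = 0)
  · rw [filter_eq_empty_iff.mpr, card_empty]
    exact fun y _ hy => h (mem_K_iff.mpr ⟨y, hy⟩)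

private lemma two_mul_K_card : 2 * (K (F := F)).card = Fintype.card F := by
  have h := card_eq_sum_card_image (asMap (F := F)) univ
  rw [← card_univ, h]
  have hK : ∀ b ∈ (K (F := F)), (univ.filter fun a : F => asMap a = b).card = 2 := by
    intro b hb
    have hf := fiber_card (F := F) b
    rw [if_pos hb] at hf
    rw [show (univ.filter fun a : F => asMap a = b)
      = univ.filter fun y : F => y ^ 2 + y = b from rfl]
    exact hf
  rw [show (univ.image (asMap (F := F))) = K from rfl, Finset.sum_congr rfl hK,
    Finset.sum_const, smul_eq_mul, mul_comm]

private lemma K_add_self (a : F) : a + a = 0 := CharTwo.add_self_eq_zero a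

private lemma K_mem_add {a b : F} (ha : a ∈ K) (hb : b ∈ K) : a + b ∈ K := by
  obtain ⟨y, hy⟩ := mem_K_iff.mp ha
  obtain ⟨z, hz⟩ := mem_K_iff.mp hb
  exact mem_K_iff.mpr ⟨y + z, by rw [asMap_add, hy, hz]⟩

private lemma K_mem_add_iff {a b : F} (ha : a ∈ K) : a + b ∈ K ↔ b ∈ K := by
  constructor
  · intro h; have := K_mem_add ha h
    rwa [show a + (a + b) = b by rw [← add_assoc, K_add_self, zero_add]] at this
  · exact K_mem_add ha

private lemma K_mem_add_of_not {a b : F} (ha : a ∉ K) (hb : b ∉ K) : a + b ∈ K := by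
  classical
  set Ka : Finset F := K.image (a + ·) with hKa
  have hdisj : Disjoint (K (F := F)) Ka := by
    rw [Finset.disjoint_right]
    intro x hx hxK
    obtain ⟨k, hk, rfl⟩ := mem_image.mp hx
    have h2 := K_mem_add hk hxK
    exact ha (by rwa [show k + (a + k) = a by
      rw [add_comm a k, ← add_assoc, K_add_self, zero_add]] at h2)
  have hcard : Ka.card = (K (F := F)).card :=
    Finset.card_image_of_injective _ (add_right_injective a)
  have hunion : (K (F := F)) ∪ Ka = univ := by
    apply Finset.eq_univ_of_card
    rw [Finset.card_union_of_disjoint hdisj, hcard, ← two_mul, two_mul_K_card]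
  have hbmem : b ∈ (K (F := F)) ∪ Ka := hunion ▸ mem_univ b
  rcases Finset.mem_union.mp hbmem with h | h
  · exact absurd h hb
  · obtain ⟨k, hk, rfl⟩ := mem_image.mp h
    rwa [show a + (a + k) = k by rw [← add_assoc, K_add_self, zero_add]]

private def chi (c : F) : ℤ := if c ∈ K then 1 else -1

private lemma chi_mul (a b : F) : chi (a + b) = chi a * chi b := by
  unfold chi
  by_cases ha : a ∈ K <;> by_cases hb : b ∈ K
  · rw [if_pos ha, if_pos hb, if_pos (K_mem_add ha hb), one_mul]
  · rw [if_pos ha, if_neg hb, if_neg (fun h => hb ((K_mem_add_iff ha).mp h)), one_mul]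
  · rw [if_neg ha, if_pos hb,
      if_neg (fun h => ha ((K_mem_add_iff hb).mp (by rwa [add_comm] at h))), mul_one]
  · rw [if_neg ha, if_neg hb, if_pos (K_mem_add_of_not ha hb), neg_mul_neg, one_mul]

private lemma chi_zero : chi (0 : F) = 1 := by
  have h0 : (0 : F) ∈ K := mem_K_iff.mpr ⟨0, by simp [asMap]⟩
  unfold chi; rw [if_pos h0]

private lemma sq_inj : Function.Injective (fun x : F => x ^ 2) := by
  intro x y hxy
  simp only at hxy
  have hz : (x + y) ^ 2 = 0 := by rw [CharTwo.add_sq, hxy, K_add_self]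
  have hz2 := pow_eq_zero_iff (n := 2) (by norm_num) |>.mp hz
  linear_combination hz2 - y * (CharTwo.two_eq_zero (R := F))

private lemma sq_surj (u : F) : ∃ r : F, r ^ 2 = u := by
  obtain ⟨r, hr⟩ := (Finite.injective_iff_surjective.mp (sq_inj (F := F))) u
  exact ⟨r, hr⟩

private lemma K_sq_mem_iff (t : F) : t ^ 2 ∈ (K (F := F)) ↔ t ∈ K := by
  have fwd : ∀ s : F, s ∈ (K (F := F)) → s ^ 2 ∈ (K (F := F)) := by
    intro s hs
    obtain ⟨y, hy⟩ := mem_K_iff.mp hs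
    refine mem_K_iff.mpr ⟨y ^ 2, ?_⟩
    unfold asMap at hy ⊢
    rw [← hy, CharTwo.add_sq]
  constructor
  · intro h
    have himg : (K (F := F)).image (fun x => x ^ 2) = K := by
      apply Finset.eq_of_subset_of_card_le
      · intro x hx
        obtain ⟨k, hk, rfl⟩ := mem_image.mp hx
        exact fwd k hk
      · rw [Finset.card_image_of_injective _ sq_inj]
    rw [← himg] at h
    obtain ⟨k, hk, hkt⟩ := mem_image.mp h
    rwa [← sq_inj hkt]
  · exact fwd t

private lemma chi_sq (t : F) : chi (t ^ 2) = chi t := by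
  unfold chi
  by_cases h : t ∈ K
  · rw [if_pos ((K_sq_mem_iff t).mpr h), if_pos h]
  · rw [if_neg (fun hh => h ((K_sq_mem_iff t).mp hh)), if_neg h]

private lemma sum_chi : ∑ t : F, chi t = 0 := by
  have h1 : ∀ t ∈ (K (F := F)), chi t = 1 := fun t ht => if_pos ht
  have h2 : ∀ t ∈ univ \ (K (F := F)), chi (F := F) t = -1 :=
    fun t ht => if_neg (Finset.mem_sdiff.mp ht).2
  rw [← Finset.sum_sdiff (Finset.subset_univ (K (F := F))), Finset.sum_congr rfl h2,
    Finset.sum_congr rfl h1, Finset.sum_const, Finset.sum_const,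
    Finset.card_sdiff_of_subset (Finset.subset_univ _), card_univ]
  have h3 := two_mul_K_card (F := F)
  have hle : (K (F := F)).card ≤ Fintype.card F := by omega
  simp only [smul_eq_mul, mul_neg_one, mul_one, nsmul_eq_mul]
  push_cast [Nat.cast_sub hle]
  omega

private lemma fiber_card_int (c : F) :
    ((univ.filter fun y : F => y ^ 2 + y = c).card : ℤ) = 1 + chi c := by
  rw [fiber_card, chi]
  split_ifs <;> norm_num

private lemma count_eq :
    (Nat.card {P : F × F // P.2 ^ 2 + P.2 = P.1 ^ 3 + 1} : ℤ)
      = (Fintype.card F : ℤ) + chi (1 : F) * ∑ x : F, chi (x ^ 3) := by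
  classical
  have e1 : Nat.card {P : F × F // P.2 ^ 2 + P.2 = P.1 ^ 3 + 1}
      = ∑ x : F, (univ.filter fun y : F => y ^ 2 + y = x ^ 3 + 1).card := by
    rw [Nat.card_eq_fintype_card]
    rw [Fintype.card_congr (Equiv.subtypeProdEquivSigmaSubtype
      (fun (a b : F) => b ^ 2 + b = a ^ 3 + 1))]
    rw [Fintype.card_sigma]
    exact Finset.sum_congr rfl fun x _ => (Fintype.card_subtype _)
  rw [e1]
  push_cast
  rw [Finset.sum_congr rfl fun x (_ : x ∈ univ) => fiber_card_int (x ^ 3 + 1)]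
  rw [Finset.sum_add_distrib]
  simp only [Finset.sum_const, card_univ, nsmul_eq_mul, mul_one]
  congr 1
  rw [Finset.mul_sum]
  exact Finset.sum_congr rfl fun x _ => by rw [chi_mul, mul_comm]

private lemma three_not_dvd (m : ℕ) (hm : Odd m) : ¬ (3 ∣ 2 ^ m - 1) := by
  intro h
  have h1 : (1:ℕ) ≤ 2 ^ m := Nat.one_le_two_pow
  have h2 : ((2 ^ m - 1 : ℕ) : ZMod 3) = 0 := by
    exact_mod_cast (ZMod.natCast_eq_zero_iff _ 3).mpr h
  rw [Nat.cast_sub h1] at h2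
  push_cast at h2
  rw [show ((2 : ZMod 3)) = -1 from by decide, hm.neg_one_pow] at h2
  revert h2; decide

private lemma three_dvd (m : ℕ) (hm : Even m) : 3 ∣ 2 ^ m - 1 := by
  have h1 : (1:ℕ) ≤ 2 ^ m := Nat.one_le_two_pow
  rw [← ZMod.natCast_eq_zero_iff, Nat.cast_sub h1]
  push_cast
  rw [show ((2 : ZMod 3)) = -1 from by decide, hm.neg_one_pow]
  decide

private lemma cube_inj (m : ℕ) (hmodd : Odd m) (hF : Fintype.card F = 2 ^ m) :
    Function.Injective (fun x : F => x ^ 3) := by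
  intro x y hxy
  simp only at hxy
  by_cases hy : y = 0
  · subst hy
    simpa using pow_eq_zero_iff (n := 3) (by norm_num) |>.mp (by simpa using hxy)
  · have hx : x ≠ 0 := by
      intro h
      rw [h] at hxy
      exact hy (pow_eq_zero_iff (n := 3) (by norm_num) |>.mp (by simpa using hxy.symm))
    set ux : Fˣ := Units.mk0 x hx with hux
    set uy : Fˣ := Units.mk0 y hy with huy
    have hu : (ux * uy⁻¹) ^ 3 = 1 := by
      ext
      push_cast
      field_simp
      exact hxy
    have hdvd3 : orderOf (ux * uy⁻¹) ∣ 3 := orderOf_dvd_of_pow_eq_one hu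
    have hdvdc : orderOf (ux * uy⁻¹) ∣ 2 ^ m - 1 := by
      have := orderOf_dvd_card (x := ux * uy⁻¹)
      rwa [Fintype.card_units, hF] at this
    rcases (Nat.prime_three.eq_one_or_self_of_dvd _ hdvd3) with h1 | h3
    · have h4 : ux * uy⁻¹ = 1 := orderOf_eq_one_iff.mp h1
      have h5 : ux = uy := by rwa [mul_inv_eq_one] at h4
      have := congrArg (Units.val) h5
      simpa [hux, huy] using this
    · exact absurd (h3 ▸ hdvdc) (three_not_dvd m hmodd)

private lemma exists_omega (m : ℕ) (hmeven : Even m)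
    (hF : Fintype.card F = 2 ^ m) :
    ∃ w : F, w ≠ 0 ∧ w ≠ 1 ∧ w ^ 2 + w + 1 = 0 ∧ w ^ 3 = 1 := by
  have hdvd : 3 ∣ Fintype.card Fˣ := by
    rw [Fintype.card_units, hF]; exact three_dvd m hmeven
  obtain ⟨ω, hω⟩ := exists_prime_orderOf_dvd_card 3 hdvd
  have h3 : (ω : F) ^ 3 = 1 := by
    have hh := pow_orderOf_eq_one ω
    rw [hω] at hh
    calc (ω : F) ^ 3 = ((ω ^ 3 : Fˣ) : F) := by push_cast; ring
      _ = 1 := by rw [hh, Units.val_one]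
  have hne1 : (ω : F) ≠ 1 := by
    intro h
    have : ω = 1 := Units.ext h
    rw [this, orderOf_one] at hω; norm_num at hω
  refine ⟨(ω : F), Units.ne_zero ω, hne1, ?_, h3⟩
  have h2 : (2 : F) = 0 := CharTwo.two_eq_zero
  have hne : (ω : F) + 1 ≠ 0 := by
    intro h
    exact hne1 (by linear_combination h - h2)
  have key : ((ω : F) + 1) * ((ω : F) ^ 2 + (ω : F) + 1) = 0 := by
    linear_combination h3 + ((ω:F)^2 + (ω:F) + 1) * h2
  exact (mul_eq_zero.mp key).resolve_left hne

private lemma chi_one_even (w : F) (hw : w ^ 2 + w + 1 = 0) : chi (1 : F) = 1 := by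
  have h2 : (2 : F) = 0 := CharTwo.two_eq_zero
  have h1 : (1 : F) ∈ K := mem_K_iff.mpr ⟨w, by
    unfold asMap; linear_combination hw - h2⟩
  unfold chi; rw [if_pos h1]

private lemma innerSumEC (hchi1 : chi (1 : F) = 1) (u : F) :
    ∑ x : F, chi (x ^ 3 + (x + u) ^ 3)
      = if u ^ 4 = u then (Fintype.card F : ℤ) else 0 := by
  have h2 : (2:F) = 0 := CharTwo.two_eq_zero
  obtain ⟨r, hr⟩ := sq_surj u
  have hterm : ∀ x : F, chi (x ^ 3 + (x + u) ^ 3) = chi ((r + u ^ 2) * x) * chi (u ^ 3) := by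
    intro x
    have e1 : x ^ 3 + (x + u) ^ 3 = ((r * x) ^ 2 + u ^ 2 * x) + u ^ 3 := by
      linear_combination (-(x^2)) * hr + (x^3 + x^2*u + x*u^2) * h2
    rw [e1, chi_mul, chi_mul, chi_sq, ← chi_mul,
      show r * x + u ^ 2 * x = (r + u ^ 2) * x by ring]
  rw [Finset.sum_congr rfl fun x _ => hterm x, ← Finset.sum_mul]
  by_cases hc : u ^ 4 = u
  · rw [if_pos hc]
    have hreq : r = u ^ 2 := sq_inj (show r ^ 2 = (u ^ 2) ^ 2 by rw [hr]; linear_combination -hc)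
    have hru : r + u ^ 2 = 0 := by rw [hreq, K_add_self]
    have hchiu : chi (u ^ 3) = 1 := by
      by_cases hu0 : u = 0
      · rw [hu0, show (0:F)^3 = 0 by ring, chi_zero]
      · have hu3 : u ^ 3 = 1 := by
          have : u * u ^ 3 = u * 1 := by linear_combination hc
          exact mul_left_cancel₀ hu0 this
        rw [hu3, hchi1]
    rw [hchiu, mul_one]
    have : ∀ x : F, chi ((r + u ^ 2) * x) = 1 := by
      intro x; rw [hru, zero_mul, chi_zero]
    rw [Finset.sum_congr rfl fun x _ => this x, Finset.sum_const, card_univ,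
      nsmul_eq_mul, mul_one]
  · rw [if_neg hc]
    have hne : r + u ^ 2 ≠ 0 := by
      intro h
      apply hc
      have hreq : r = u ^ 2 := by linear_combination h - u ^ 2 * h2
      rw [show u ^ 4 = (u ^ 2) ^ 2 by ring, ← hreq, hr]
    have hbij : Function.Bijective (fun x : F => (r + u ^ 2) * x) :=
      mulLeft_bijective₀ _ hne
    rw [Function.Bijective.sum_comp hbij chi, sum_chi, zero_mul]

private lemma quartic_card (w : F) (hw0 : w ≠ 0) (hw1 : w ≠ 1)
    (hw : w ^ 2 + w + 1 = 0) (hw3 : w ^ 3 = 1) :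
    (univ.filter fun u : F => u ^ 4 = u).card = 4 := by
  have h2 : (2:F) = 0 := CharTwo.two_eq_zero
  have hw2ne1 : w ^ 2 ≠ 1 := by
    intro h
    exact hw0 (by linear_combination hw - h - h2)
  have hwnew2 : w ≠ w ^ 2 := by
    intro h
    exact one_ne_zero (by linear_combination hw + h - w * h2 : (1:F) = 0)
  have heq : (univ.filter fun u : F => u ^ 4 = u) = {0, 1, w, w ^ 2} := by
    ext u
    simp only [mem_filter, mem_univ, true_and, mem_insert, mem_singleton]
    constructor
    · intro hu
      have hp : u * (u + 1) * (u + w) * (u + w ^ 2) = 0 := by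
        linear_combination hu + u*(u^2 + u*w + w + 1) * hw - u*(w^2 + w) * h2
      rcases mul_eq_zero.mp hp with hp1 | h4
      · rcases mul_eq_zero.mp hp1 with hp2 | h3
        · rcases mul_eq_zero.mp hp2 with h1 | h2'
          · exact Or.inl h1
          · exact Or.inr (Or.inl (by linear_combination h2' - h2))
        · exact Or.inr (Or.inr (Or.inl (by linear_combination h3 - w * h2)))
      · exact Or.inr (Or.inr (Or.inr (by linear_combination h4 - w ^ 2 * h2)))
    · rintro (rfl | rfl | h | h)
      · ring
      · ring
      · rw [h]; linear_combination w * hw3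
      · rw [h]; linear_combination (w ^ 5 + w ^ 2) * hw3
  rw [heq]
  rw [card_insert_of_notMem, card_insert_of_notMem, card_insert_of_notMem, card_singleton]
  · simp only [mem_singleton]; exact hwnew2
  · simp only [mem_insert, mem_singleton]
    push_neg
    exact ⟨fun h => hw1 h.symm, fun h => hw2ne1 h.symm⟩
  · simp only [mem_insert, mem_singleton]
    push_neg
    refine ⟨fun h => one_ne_zero h.symm, fun h => hw0 h.symm, fun h => ?_⟩
    exact (pow_ne_zero 2 hw0) h.symm

private lemma S_sq (hchi1 : chi (1 : F) = 1)
    (w : F) (hw0 : w ≠ 0) (hw1 : w ≠ 1) (hw : w ^ 2 + w + 1 = 0) (hw3 : w ^ 3 = 1) :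
    (∑ x : F, chi (x ^ 3)) * (∑ x : F, chi (x ^ 3)) = 4 * (Fintype.card F : ℤ) := by
  have e1 : (∑ x : F, chi (x ^ 3)) * (∑ x : F, chi (x ^ 3))
      = ∑ x : F, ∑ u : F, chi (x ^ 3 + (x + u) ^ 3) := by
    rw [Finset.sum_mul]
    refine Finset.sum_congr rfl fun x _ => ?_
    rw [Finset.mul_sum]
    rw [Finset.sum_congr rfl fun y (_ : y ∈ univ) => (chi_mul (x ^ 3) (y ^ 3)).symm]
    exact (Equiv.sum_comp (Equiv.addLeft x) (fun y => chi (x ^ 3 + y ^ 3))).symm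
  rw [e1, Finset.sum_comm]
  rw [Finset.sum_congr rfl fun u (_ : u ∈ univ) => innerSumEC hchi1 u]
  rw [← Finset.sum_filter, Finset.sum_const, quartic_card w hw0 hw1 hw hw3,
    nsmul_eq_mul]
  push_cast
  ring

private lemma cube_fiber_card (w : F) (hw0 : w ≠ 0) (hw1 : w ≠ 1)
    (hw : w ^ 2 + w + 1 = 0) (hw3 : w ^ 3 = 1) (d : F) (hd : d ≠ 0) :
    ((univ.erase 0).filter fun x : F => x ^ 3 = d ^ 3).card = 3 := by
  have h2 : (2:F) = 0 := CharTwo.two_eq_zero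
  have hw2ne1 : w ^ 2 ≠ 1 := by
    intro h
    exact hw0 (by linear_combination hw - h - h2)
  have hwnew2 : w ≠ w ^ 2 := by
    intro h
    exact one_ne_zero (by linear_combination hw + h - w * h2 : (1:F) = 0)
  have heq : ((univ.erase 0).filter fun x : F => x ^ 3 = d ^ 3)
      = {d, d * w, d * w ^ 2} := by
    ext x
    simp only [mem_filter, Finset.mem_erase, mem_univ, and_true, mem_insert, mem_singleton]
    constructor
    · rintro ⟨hx0, hx⟩
      have hp : (x + d) * (x + d * w) * (x + d * w ^ 2) = 0 := by
        linear_combination hx + (x^2*d + x*w*d^2 + w*d^3 + d^3) * hw - d^3*(w^2 + w) * h2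
      rcases mul_eq_zero.mp hp with hp1 | h4
      · rcases mul_eq_zero.mp hp1 with h1 | h3
        · exact Or.inl (by linear_combination h1 - d * h2)
        · exact Or.inr (Or.inl (by linear_combination h3 - d * w * h2))
      · exact Or.inr (Or.inr (by linear_combination h4 - d * w ^ 2 * h2))
    · rintro (rfl | rfl | rfl)
      · exact ⟨hd, rfl⟩
      · exact ⟨mul_ne_zero hd hw0, by linear_combination d ^ 3 * hw3⟩
      · exact ⟨mul_ne_zero hd (pow_ne_zero 2 hw0),
          by linear_combination (d ^ 3 * w ^ 3 + d ^ 3) * hw3⟩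
  rw [heq]
  rw [card_insert_of_notMem, card_insert_of_notMem, card_singleton]
  · simp only [mem_singleton]
    intro h
    exact hwnew2 (mul_left_cancel₀ hd h)
  · simp only [mem_insert, mem_singleton]
    push_neg
    constructor
    · intro h
      exact hw1 (mul_left_cancel₀ hd (by rw [← h, mul_one])).symm
    · intro h
      exact hw2ne1 (mul_left_cancel₀ hd (by rw [← h, mul_one])).symm

private lemma S_mod_three (w : F) (hw0 : w ≠ 0) (hw1 : w ≠ 1)
    (hw : w ^ 2 + w + 1 = 0) (hw3 : w ^ 3 = 1) :
    (3 : ℤ) ∣ (∑ x : F, chi (x ^ 3)) - 1 := by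
  have hsplit : ∑ x : F, chi (x ^ 3)
      = chi ((0:F) ^ 3) + ∑ x ∈ univ.erase (0:F), chi (x ^ 3) :=
    (Finset.add_sum_erase univ (fun x : F => chi (x ^ 3)) (mem_univ 0)).symm
  rw [hsplit, show ((0:F) ^ 3) = 0 by ring, chi_zero, add_sub_cancel_left]
  rw [Finset.sum_comp (chi (F := F)) (fun x : F => x ^ 3)]
  apply Finset.dvd_sum
  intro b hb
  obtain ⟨d, hd, hdb⟩ := mem_image.mp hb
  have hd0 : d ≠ 0 := (Finset.mem_erase.mp hd).1
  have hcard : ((univ.erase (0:F)).filter fun x : F => x ^ 3 = b).card = 3 := by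
    rw [← hdb]
    exact cube_fiber_card w hw0 hw1 hw hw3 d hd0
  rw [hcard]
  exact ⟨chi b, by push_cast; ring⟩

end AuxEC

/-- The number of `F_{2^m}`-rational points (including the point at infinity) of the
elliptic curve `y² + y = x³ + 1` equals `2^m + 1` if `m` is odd, and
`2^m + 1 - 2(-2)^(m/2)` if `m` is even. -/
theorem stmt10 (m : ℕ) (hm : 0 < m)
    (F : Type*) [Field F] [Fintype F] (hF : Fintype.card F = 2 ^ m) :
    (Odd m →
      ((1 + Nat.card {P : F × F // P.2 ^ 2 + P.2 = P.1 ^ 3 + 1} : ℕ) : ℤ) = 2 ^ m + 1)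
    ∧ (Even m →
      ((1 + Nat.card {P : F × F // P.2 ^ 2 + P.2 = P.1 ^ 3 + 1} : ℕ) : ℤ)
        = 2 ^ m + 1 - 2 * (-2) ^ (m / 2)) := by
  classical
  have hchar : ringChar F = 2 := by
    obtain ⟨n, hp, hc⟩ := FiniteField.card F (ringChar F)
    have hdvd : ringChar F ∣ 2 ^ m := by
      rw [← hF, hc]
      exact dvd_pow_self _ (by positivity)
    exact (Nat.prime_dvd_prime_iff_eq hp Nat.prime_two).mp (hp.dvd_of_dvd_pow hdvd)
  haveI : CharP F 2 := hchar ▸ ringChar.charP F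
  have hcount := count_eq (F := F)
  constructor
  · intro hodd
    have hS : ∑ x : F, chi (x ^ 3) = ∑ t : F, chi t :=
      Function.Bijective.sum_comp
        (Finite.injective_iff_bijective.mp (cube_inj m hodd hF)) chi
    push_cast
    rw [hcount, hS, sum_chi, mul_zero, add_zero, hF]
    push_cast
    ring
  · intro heven
    obtain ⟨w, hw0, hw1, hw, hw3⟩ := exists_omega m heven hF
    have hchi1 : chi (1 : F) = 1 := chi_one_even w hw
    obtain ⟨k, hk⟩ := heven
    have hk2 : m / 2 = k := by omega
    set S : ℤ := ∑ x : F, chi (x ^ 3) with hSdef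
    have hsq : S * S = 4 * (2 ^ m : ℤ) := by
      rw [hSdef, S_sq hchi1 w hw0 hw1 hw hw3, hF]
      push_cast
      ring
    set t : ℤ := -2 * (-2) ^ k with htdef
    have ht : t * t = 4 * (2 ^ m : ℤ) := by
      rw [htdef, show m = 2 * k by omega]
      rw [show (-2 * (-2) ^ k) * (-2 * (-2) ^ k) = 4 * ((-2) ^ k * (-2) ^ k) by ring,
        ← mul_pow]
      norm_num
      rw [show ((4:ℤ)) = 2 ^ 2 by norm_num, ← pow_mul]
    have hfac : (S - t) * (S + t) = 0 := by linear_combination hsq - ht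
    have hS3 : (3 : ℤ) ∣ S - 1 := S_mod_three w hw0 hw1 hw hw3
    have hT3 : (3 : ℤ) ∣ t - 1 := by
      have hdvd : (-2 : ℤ) - 1 ∣ (-2) ^ (k + 1) - 1 ^ (k + 1) := sub_dvd_pow_sub_pow _ _ _
      have htk : t = (-2 : ℤ) ^ (k + 1) := by rw [htdef, pow_succ]; ring
      rw [one_pow, show ((-2 : ℤ) - 1) = -3 by norm_num] at hdvd
      rw [htk]
      exact neg_dvd.mp hdvd
    have hSt : S = t := by
      rcases mul_eq_zero.mp hfac with h | h
      · linarith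
      · exfalso
        have hd : (3 : ℤ) ∣ (S - 1) + (t - 1) := dvd_add hS3 hT3
        have hst : S = -t := by linarith
        rw [hst] at hd
        omega
    push_cast
    rw [hcount, hchi1, one_mul, hSt, htdef, hF, hk2]
    push_cast
    ring
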